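/- Let (Ω, 𝒜) be a measurable space, d a natural number, and X : Ω → (Fin d → ℝ) a measurable function that is bounded, i.e. there exists C ∈ ℝ such that |X ω j| ≤ C for all ω and j. Define B = { y : Fin d → ℝ | ∃ ν : Measure Ω, IsProbabilityMeasure ν ∧ y = ∫ X ∂ν }. If Set.range X is a closed subset of Fin d → ℝ, then B is compact. -/

import Mathlib

open MeasureTheory

/-- The convex hull of a compact set in a finite-dimensional real normed space is compact. -/
lemma aux_isCompact_convexHull {E : Type*} [NormedAddCommGroup E] [NormedSpace ℝ E]
    [FiniteDimensional ℝ E] {s : Set E} (hs : IsCompact s) :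
    IsCompact (convexHull ℝ s) := by
  classical
  rcases s.eq_empty_or_nonempty with rfl | ⟨e, he⟩
  · simp
  set n : ℕ := Module.finrank ℝ E + 1 with hn
  set T : Set ((Fin n → ℝ) × (Fin n → E)) :=
    (stdSimplex ℝ (Fin n)) ×ˢ (Set.univ.pi fun _ => s) with hT
  have hTcomp : IsCompact T :=
    (isCompact_stdSimplex (𝕜 := ℝ) (ι := Fin n)).prod (isCompact_univ_pi fun _ => hs)
  have hcont : Continuous (fun p : (Fin n → ℝ) × (Fin n → E) => ∑ i, p.1 i • p.2 i) := by
    fun_prop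
  have himage : convexHull ℝ s = (fun p : (Fin n → ℝ) × (Fin n → E) => ∑ i, p.1 i • p.2 i) '' T := by
    apply Set.Subset.antisymm
    · intro x hx
      obtain ⟨ι, hι, z, w, hzs, hzind, hwpos, hwsum, hwz⟩ :=
        eq_pos_convex_span_of_mem_convexHull hx
      have hcard : Fintype.card ι ≤ n := by
        refine hzind.card_le_finrank_succ.trans ?_
        exact Nat.add_le_add_right (Submodule.finrank_le _) 1
      obtain ⟨g⟩ : Nonempty (ι ↪ Fin n) :=
        Function.Embedding.nonempty_of_card_le (by simpa using hcard)
      set W : Fin n → ℝ := Function.extend g w 0 with hW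
      set Z : Fin n → E := Function.extend g z (fun _ => e) with hZ
      have hWg : ∀ i, W (g i) = w i := fun i => g.injective.extend_apply w 0 i
      have hZg : ∀ i, Z (g i) = z i := fun i => g.injective.extend_apply z _ i
      have hW0 : ∀ j, j ∉ Set.range g → W j = 0 := by
        intro j hj
        rw [hW, Function.extend_apply' _ _ _ (by simpa [Set.range] using hj)]
        rfl
      have hmap : ∀ j : Fin n, j ∉ Finset.univ.map g → j ∉ Set.range ⇑g := by
        intro j hj
        simpa [Finset.mem_map] using hj
      have h1 : ∑ j, W j = ∑ i, w i := by
        have e1 : ∑ i, w i = ∑ j ∈ Finset.univ.map g, W j := by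
          rw [Finset.sum_map]
          exact Finset.sum_congr rfl fun i _ => (hWg i).symm
        rw [e1]
        exact (Finset.sum_subset (Finset.subset_univ _)
          (fun j _ hj => hW0 j (hmap j hj))).symm
      have h2 : ∑ j, W j • Z j = ∑ i, w i • z i := by
        have e1 : ∑ i, w i • z i = ∑ j ∈ Finset.univ.map g, W j • Z j := by
          rw [Finset.sum_map]
          exact Finset.sum_congr rfl fun i _ => by rw [hWg, hZg]
        rw [e1]
        exact (Finset.sum_subset (Finset.subset_univ _)
          (fun j _ hj => by rw [hW0 j (hmap j hj), zero_smul])).symm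
      refine ⟨⟨W, Z⟩, ⟨⟨?_, ?_⟩, ?_⟩, ?_⟩
      · intro j
        show 0 ≤ W j
        by_cases hj : j ∈ Set.range ⇑g
        · obtain ⟨i, rfl⟩ := hj
          rw [hWg]; exact (hwpos i).le
        · rw [hW0 j hj]
      · show ∑ j, W j = 1
        rw [h1, hwsum]
      · intro j _
        show Z j ∈ s
        by_cases hj : j ∈ Set.range ⇑g
        · obtain ⟨i, rfl⟩ := hj
          rw [hZg]; exact hzs ⟨i, rfl⟩
        · have : Z j = e := Function.extend_apply' _ _ _ (by simpa [Set.range] using hj)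
          rw [this]; exact he
      · show ∑ j, W j • Z j = x
        rw [h2, hwz]

    · rintro _ ⟨⟨W, Z⟩, ⟨⟨hW0, hW1⟩, hZ⟩, rfl⟩
      exact (convex_convexHull ℝ s).sum_mem (fun i _ => hW0 i) hW1
        (fun i _ => subset_convexHull ℝ s (hZ i (Set.mem_univ i)))
  rw [himage]
  exact hTcomp.image hcont

theorem stmt4 {Ω : Type*} [MeasurableSpace Ω]
    (d : ℕ) (X : Ω → (Fin d → ℝ)) (hX : Measurable X)
    (hbd : ∃ C : ℝ, ∀ (ω : Ω) (j : Fin d), |X ω j| ≤ C)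
    (hclosed : IsClosed (Set.range X)) :
    IsCompact {y : Fin d → ℝ | ∃ ν : Measure Ω, IsProbabilityMeasure ν ∧ y = ∫ ω, X ω ∂ν} := by
  obtain ⟨C, hC⟩ := hbd
  set C' : ℝ := |C| with hC'
  have hC'0 : 0 ≤ C' := abs_nonneg _
  have hnorm : ∀ ω, ‖X ω‖ ≤ C' := by
    intro ω
    rw [pi_norm_le_iff_of_nonneg hC'0]
    intro j
    exact (hC ω j).trans (le_abs_self C)
  -- range X is compact
  have hbdd : Bornology.IsBounded (Set.range X) := by
    apply Bornology.IsBounded.subset (Metric.isBounded_closedBall (x := (0 : Fin d → ℝ)) (r := C'))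
    rintro _ ⟨ω, rfl⟩
    simpa [Metric.mem_closedBall, dist_zero_right] using hnorm ω
  have hKcomp : IsCompact (Set.range X) := Metric.isCompact_of_isClosed_isBounded hclosed hbdd
  have hhull : IsCompact (convexHull ℝ (Set.range X)) := aux_isCompact_convexHull hKcomp
  -- integrability
  have hint : ∀ (ν : Measure Ω), IsProbabilityMeasure ν → Integrable X ν := by
    intro ν hν
    exact ⟨hX.aestronglyMeasurable,
      MeasureTheory.HasFiniteIntegral.of_bounded (C := C') (Filter.Eventually.of_forall hnorm)⟩
  convert hhull using 1
  apply Set.Subset.antisymm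
  · rintro y ⟨ν, hν, rfl⟩
    exact (convex_convexHull ℝ _).integral_mem hhull.isClosed
      (Filter.Eventually.of_forall fun ω => subset_convexHull ℝ _ ⟨ω, rfl⟩) (hint ν hν)
  · apply convexHull_min
    · rintro _ ⟨ω, rfl⟩
      refine ⟨Measure.dirac ω, inferInstance, ?_⟩
      rw [integral_dirac' _ _ hX.stronglyMeasurable]
    · rintro y ⟨ν₁, hν₁, rfl⟩ z ⟨ν₂, hν₂, rfl⟩ a b ha hb hab
      refine ⟨ENNReal.ofReal a • ν₁ + ENNReal.ofReal b • ν₂, ⟨?_⟩, ?_⟩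
      · simp [Measure.add_apply, hν₁.measure_univ, hν₂.measure_univ,
          ← ENNReal.ofReal_add ha hb, hab]
      · rw [integral_add_measure ((hint ν₁ hν₁).smul_measure (by simp))
          ((hint ν₂ hν₂).smul_measure (by simp)),
          integral_smul_measure, integral_smul_measure,
          ENNReal.toReal_ofReal ha, ENNReal.toReal_ofReal hb]
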